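/- Change of variables for sums as delta-integral substitution on ℤ: Let α : ℤ → ℤ be strictly increasing and let f : ℤ → ℝ. Then for integers a ≤ b, ∑_{t=a}^{b−1} f(α(t))·(α(t+1) − α(t)) = ∑_{s=α(a)}^{α(b)−1} f(ρ̄(s)), where ρ̄(s) = α(max{t : α(t) ≤ s}) is the largest point of the image time scale α(ℤ) not exceeding s. In particular, if f is constant on each interval [α(t), α(t+1)), then ∑_{t=a}^{b−1} f(α(t))(α(t+1) − α(t)) = ∑_{s=α(a)}^{α(b)−1} f(s). -/

import Mathlib

lemma key_subst (α : ℤ → ℤ) (hα : StrictMono α) (F G : ℤ → ℝ)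
    (h : ∀ t s : ℤ, α t ≤ s → s < α (t + 1) → G s = F (α t))
    (a b : ℤ) (hab : a ≤ b) :
    (∑ t ∈ Finset.Ico a b, F (α t) * ((α (t + 1) : ℝ) - α t)) =
      ∑ s ∈ Finset.Ico (α a) (α b), G s := by
  refine Int.le_induction (motive := fun b _ => (∑ t ∈ Finset.Ico a b, F (α t) * ((α (t + 1) : ℝ) - α t)) = ∑ s ∈ Finset.Ico (α a) (α b), G s) ?_ ?_ b hab
  · simp
  · intro b hb ih
    have hsplit : ∀ (g : ℤ → ℝ) (x y z : ℤ), x ≤ y → y ≤ z →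
        ∑ s ∈ Finset.Ico x z, g s =
          (∑ s ∈ Finset.Ico x y, g s) + ∑ s ∈ Finset.Ico y z, g s := by
      intro g x y z h1 h2
      rw [← Finset.Ico_union_Ico_eq_Ico h1 h2,
        Finset.sum_union (Finset.Ico_disjoint_Ico_consecutive x y z)]
    rw [hsplit _ a b (b + 1) hb (by linarith), ih,
      show Finset.Ico b (b + 1) = {b} by ext x; simp; omega,
      Finset.sum_singleton]
    have h1 : α a ≤ α b := hα.monotone hb
    have h2 : α b ≤ α (b + 1) := hα.monotone (by linarith)
    rw [hsplit _ (α a) (α b) (α (b + 1)) h1 h2]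
    congr 1
    have : ∀ s ∈ Finset.Ico (α b) (α (b + 1)), G s = F (α b) := by
      intro s hs
      rw [Finset.mem_Ico] at hs
      exact h b s hs.1 hs.2
    rw [Finset.sum_congr rfl this, Finset.sum_const, Int.card_Ico,
      nsmul_eq_mul, mul_comm]
    have h3 : ((α (b + 1) - α b).toNat : ℤ) = α (b + 1) - α b :=
      Int.toNat_of_nonneg (by linarith)
    congr 1
    exact_mod_cast h3.symm

/-- Substitution formula `∫_a^b f(α(t)) α^Δ(t) Δt = ∫_{α(a)}^{α(b)} f(t̄) Δ̄t̄` on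
𝕋 = ℤ: for a strictly increasing `α : ℤ → ℤ`,
`∑_{t=a}^{b-1} f(α(t))·(α(t+1) - α(t)) = ∑_{s=α(a)}^{α(b)-1} f(ρ̄(s))`, where
`ρ̄(s) = α(max {t : α(t) ≤ s})` is the largest point of the image time scale
`α(ℤ)` not exceeding `s`.  In particular, if `f` is constant on each interval
`[α(t), α(t+1))`, the right-hand side is `∑_{s=α(a)}^{α(b)-1} f(s)`. -/
theorem delta_integral_substitution_int (α : ℤ → ℤ) (hα : StrictMono α)
    (f : ℤ → ℝ) (ρ : ℤ → ℤ)
    (hρ : ∀ s t : ℤ, α t ≤ s → s < α (t + 1) → ρ s = α t)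
    (a b : ℤ) (hab : a ≤ b) :
    (∑ t ∈ Finset.Ico a b, f (α t) * ((α (t + 1) : ℝ) - α t)) =
      (∑ s ∈ Finset.Ico (α a) (α b), f (ρ s)) ∧
    ((∀ t s : ℤ, α t ≤ s → s < α (t + 1) → f s = f (α t)) →
      (∑ t ∈ Finset.Ico a b, f (α t) * ((α (t + 1) : ℝ) - α t)) =
        ∑ s ∈ Finset.Ico (α a) (α b), f s) := by
  constructor
  · exact key_subst α hα f (fun s => f (ρ s))
      (fun t s h1 h2 => by show f (ρ s) = f (α t); rw [hρ s t h1 h2]) a b hab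
  · intro hf
    exact key_subst α hα f f hf a b hab
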